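/- Let (A, φ) be an algebraic probability space and b ∈ A self-adjoint with φ(b) = 0 and φ(b²) = 1. For 1 ≤ n ≤ N and y ∈ A, let F^{(N,n)}(y) ∈ A^{⊗N} be the sum, over all ways to choose n distinct tensor positions and to place y at one of them and b at the other n−1 (with 1 elsewhere), of the corresponding elementary tensors. Then for every fixed n ≥ 1 and every integer m ≥ 1, lim_{N→∞} φ^{⊗N}( ( F^{(N,n)}(b²−1) / N^{(n+1)/2} )^m ) = 0; indeed φ^{⊗N}( (F^{(N,n)}(b²−1)/N^{(n+1)/2})^m ) = O(N^{-m/2}). -/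

import Mathlib

open scoped TensorProduct ComplexOrder
open Filter Topology

noncomputable section

/-- The product state `φ^{⊗N}` on the `N`-fold algebraic tensor power `A^{⊗N}`,
determined by `φ^{⊗N}(a_1 ⊗ ⋯ ⊗ a_N) = φ(a_1) ⋯ φ(a_N)`. -/
def prodState {A : Type*} [Ring A] [Algebra ℂ A] (φ : A →ₗ[ℂ] ℂ) (N : ℕ) :
    (⨂[ℂ] _ : Fin N, A) →ₗ[ℂ] ℂ :=
  PiTensorProduct.lift ((MultilinearMap.mkPiAlgebra ℂ (Fin N) ℂ).compLinearMap fun _ => φ)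

/-- `b(i) = 1 ⊗ ⋯ ⊗ b ⊗ ⋯ ⊗ 1 ∈ A^{⊗N}` with `b` at the `i`-th tensor factor. -/
def elemAt {A : Type*} [Ring A] [Algebra ℂ A] (b : A) (N : ℕ) (i : Fin N) :
    ⨂[ℂ] _ : Fin N, A :=
  PiTensorProduct.tprod ℂ (Function.update (fun _ => (1 : A)) i b)

/-- `b^{(N,n)} = ∑_{1 ≤ i_1 < ⋯ < i_n ≤ N} b(i_1) ⋯ b(i_n)` (and `b^{(N,0)} = 1`). -/
def bPow {A : Type*} [Ring A] [Algebra ℂ A] (b : A) (N n : ℕ) : ⨂[ℂ] _ : Fin N, A :=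
  ∑ s ∈ Finset.powersetCard n (Finset.univ : Finset (Fin N)),
    ((s.sort (· ≤ ·)).map (elemAt b N)).prod

/-- `F^{(N,n)}(y)`: the sum, over all ways to choose `n` distinct tensor positions and
to place `y` at one of them and `b` at the other `n - 1` (with `1` elsewhere), of the
corresponding elementary tensors. -/
def Fsum {A : Type*} [Ring A] [Algebra ℂ A] (b y : A) (N n : ℕ) : ⨂[ℂ] _ : Fin N, A :=
  ∑ s ∈ Finset.powersetCard n (Finset.univ : Finset (Fin N)), ∑ i ∈ s,
    PiTensorProduct.tprod ℂ (fun j => if j = i then y else if j ∈ s then b else 1)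

section Aux
variable {M : Type*} [Monoid M]

lemma prod_ofFn_one {m : ℕ} (f : Fin m → M) (h : ∀ k, f k = 1) :
    (List.ofFn f).prod = 1 := by
  apply List.prod_eq_one
  intro x hx
  rw [List.mem_ofFn] at hx
  obtain ⟨k, rfl⟩ := hx
  exact h k

lemma prod_ofFn_single {m : ℕ} (f : Fin m → M) (k₀ : Fin m)
    (h : ∀ k, k ≠ k₀ → f k = 1) : (List.ofFn f).prod = f k₀ := by
  induction m with
  | zero => exact k₀.elim0
  | succ m ih =>
    rw [List.ofFn_succ, List.prod_cons]
    rcases Fin.eq_zero_or_eq_succ k₀ with h0 | ⟨k', rfl⟩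
    · subst h0
      rw [prod_ofFn_one (fun i => f i.succ) (fun k => h _ (Fin.succ_ne_zero k)), mul_one]
    · rw [h 0 (Ne.symm (Fin.succ_ne_zero k')), one_mul]
      exact ih (fun i => f i.succ) k' (fun k hk => h _ (fun he => hk (Fin.succ_injective _ he)))

lemma sum_pow_eq {R ι : Type*} [Semiring R] (s : Finset ι) (f : ι → R) (m : ℕ) :
    (∑ i ∈ s, f i) ^ m =
      ∑ v ∈ Fintype.piFinset (fun _ : Fin m => s), (List.ofFn fun k => f (v k)).prod := by
  classical
  induction m with
  | zero => simp
  | succ m ih =>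
    rw [pow_succ', ih, Finset.sum_mul_sum, ← Finset.sum_product']
    refine Finset.sum_nbij' (fun p => Fin.cons p.1 p.2) (fun w => (w 0, fun k => w k.succ))
      ?_ ?_ ?_ ?_ ?_
    · rintro ⟨i, v⟩ hp
      rw [Finset.mem_product] at hp
      rw [Fintype.mem_piFinset]
      intro k
      refine Fin.cases ?_ ?_ k
      · simpa using hp.1
      · intro k'; simpa using Fintype.mem_piFinset.1 hp.2 k'
    · intro w hw
      rw [Fintype.mem_piFinset] at hw
      rw [Finset.mem_product]
      exact ⟨hw 0, Fintype.mem_piFinset.2 fun k => hw k.succ⟩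
    · rintro ⟨i, v⟩ _; simp
    · intro w _; simp [Fin.cons_self_tail]
      funext k; refine Fin.cases rfl (fun k' => rfl) k
    · rintro ⟨i, v⟩ _
      simp [List.ofFn_succ]
end Aux

lemma prodState_tprod {A : Type*} [Ring A] [Algebra ℂ A] (φ : A →ₗ[ℂ] ℂ) {N : ℕ}
    (f : Fin N → A) :
    prodState φ N (PiTensorProduct.tprod ℂ f) = ∏ j, φ (f j) := by
  simp [prodState]

lemma list_prod_tprod {A : Type*} [Ring A] [Algebra ℂ A] {N m : ℕ} (g : Fin m → Fin N → A) :
    (List.ofFn fun k => PiTensorProduct.tprod ℂ (g k)).prod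
      = PiTensorProduct.tprod ℂ (fun j => (List.ofFn fun k => g k j).prod) := by
  induction m with
  | zero =>
    simp [PiTensorProduct.one_def]
    rfl
  | succ m ih =>
    rw [List.ofFn_succ, List.prod_cons, ih fun k => g k.succ, PiTensorProduct.tprod_mul_tprod]
    congr 1
    funext j
    simp [List.ofFn_succ]


/-- Lemma 3.5: for a self-adjoint `b` with `φ(b) = 0` and `φ(b²) = 1`, the moments of
`z_{nN} = F^{(N,n)}(b² - 1)/N^{(n+1)/2}` (w.r.t. the product states `φ^{⊗N}`) tend to
`0`; indeed the `m`-th moment is `O(N^{-m/2})`. -/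
theorem Fsum_tendsto_zero
    {A : Type*} [Ring A] [Algebra ℂ A] [StarRing A] [StarModule ℂ A]
    (φ : A →ₗ[ℂ] ℂ) (hφ_unital : φ 1 = 1) (hφ_pos : ∀ a, 0 ≤ φ (star a * a))
    (b : A) (hb : star b = b) (hb1 : φ b = 0) (hb2 : φ (b * b) = 1)
    (n : ℕ) (hn : 1 ≤ n) (m : ℕ) (hm : 1 ≤ m) :
    Tendsto
      (fun N : ℕ =>
        prodState φ N
          (((((N : ℝ) ^ (-((n : ℝ) + 1) / 2) : ℝ) : ℂ) • Fsum b (b * b - 1) N n) ^ m))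
      atTop (𝓝 0) ∧
    (fun N : ℕ =>
        prodState φ N
          (((((N : ℝ) ^ (-((n : ℝ) + 1) / 2) : ℝ) : ℂ) • Fsum b (b * b - 1) N n) ^ m))
      =O[atTop] (fun N : ℕ => (N : ℝ) ^ (-(m : ℝ) / 2)) := by
  classical
  set y : A := b * b - 1 with hy
  have hy0 : φ y = 0 := by rw [hy, map_sub, hb2, hφ_unital, sub_self]
  have hne : (Finset.univ : Finset (Fin m → Fin 3)).Nonempty := Finset.univ_nonempty
  set w3 : Fin 3 → A := fun i => if i = 0 then 1 else if i = 1 then b else y with hw3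
  set C₁ : ℝ := max (Finset.univ.sup' hne fun c : Fin m → Fin 3 =>
      ‖φ ((List.ofFn fun k => w3 (c k)).prod)‖) 1 with hC₁
  have hC₁1 : (1:ℝ) ≤ C₁ := le_max_right _ _
  have hword : ∀ c : Fin m → Fin 3, ‖φ ((List.ofFn fun k => w3 (c k)).prod)‖ ≤ C₁ :=
    fun c => le_trans (Finset.le_sup' (fun c : Fin m → Fin 3 =>
      ‖φ ((List.ofFn fun k => w3 (c k)).prod)‖) (Finset.mem_univ c)) (le_max_left _ _)
  set K : ℕ := m * n / 2 with hK
  set B : ℝ := ((K+1) * (2^K*K)^m : ℕ) * C₁ ^ (m*n) with hB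
  have main : ∀ N : ℕ, 1 ≤ N →
      ‖prodState φ N (((((N : ℝ) ^ (-((n : ℝ) + 1) / 2) : ℝ) : ℂ) • Fsum b y N n) ^ m)‖
        ≤ B * (N:ℝ) ^ (-(m:ℝ)/2) := by
    intro N hN1
    set T : Finset (Σ _ : Finset (Fin N), Fin N) :=
      (Finset.powersetCard n (Finset.univ : Finset (Fin N))).sigma
        (fun s => (s : Finset (Fin N))) with hT
    set g : (Σ _ : Finset (Fin N), Fin N) → Fin N → A :=
      fun p j => if j = p.2 then y else if j ∈ p.1 then b else 1 with hg
    have hF : Fsum b y N n = ∑ p ∈ T, PiTensorProduct.tprod ℂ (g p) := by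
      rw [Fsum, hT, Finset.sum_sigma]
    set w : (Fin m → Σ _ : Finset (Fin N), Fin N) → Fin N → A :=
      fun v j => (List.ofFn fun k => g (v k) j).prod with hwdef
    set V := Fintype.piFinset (fun _ : Fin m => T) with hV
    have hS : prodState φ N ((Fsum b y N n) ^ m) = ∑ v ∈ V, ∏ j, φ (w v j) := by
      rw [hF, sum_pow_eq, map_sum]
      refine Finset.sum_congr rfl fun v _ => ?_
      rw [list_prod_tprod, prodState_tprod]
    set U : (Fin m → Σ _ : Finset (Fin N), Fin N) → Finset (Fin N) :=
      fun v => Finset.univ.biUnion (fun k => (v k).1) with hU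
    have hmemT : ∀ p : (Σ _ : Finset (Fin N), Fin N), p ∈ T → p.1.card = n ∧ p.2 ∈ p.1 := by
      intro p hp
      rw [hT, Finset.mem_sigma, Finset.mem_powersetCard] at hp
      exact ⟨hp.1.2, hp.2⟩
    have hwnorm : ∀ v j, ‖φ (w v j)‖ ≤ C₁ := by
      intro v j
      have he : w v j = (List.ofFn fun k =>
          w3 (if j = (v k).2 then 2 else if j ∈ (v k).1 then 1 else 0)).prod := by
        simp only [hwdef]
        congr 2
        funext k
        simp only [hg]
        split_ifs with h1 h2
        · exact (by simp only [hw3]; rw [if_neg (by decide), if_neg (by decide)] : w3 2 = y).symm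
        · exact (by simp only [hw3]; rw [if_neg (by decide)]; rfl : w3 1 = b).symm
        · exact (by simp only [hw3]; rfl : w3 0 = 1).symm
      rw [he]
      exact hword _
    have hw1 : ∀ v, (∀ k, v k ∈ T) → ∀ j, j ∉ U v → w v j = 1 := by
      intro v hv j hj
      simp only [hwdef]
      apply prod_ofFn_one
      intro k
      have h1 : j ∉ (v k).1 := fun h => hj (Finset.mem_biUnion.2 ⟨k, Finset.mem_univ _, h⟩)
      have h2 : j ≠ (v k).2 := fun h => h1 (h ▸ (hmemT _ (hv k)).2)
      simp only [hg]
      rw [if_neg h2, if_neg h1]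
    have hzero : ∀ v, (∀ k, v k ∈ T) → ∀ j,
        (Finset.univ.filter fun k => j ∈ (v k).1).card = 1 → φ (w v j) = 0 := by
      intro v hv j hcov
      obtain ⟨k₀, hk₀⟩ := Finset.card_eq_one.1 hcov
      have hk₀mem : j ∈ (v k₀).1 := by
        have hm0 : k₀ ∈ Finset.univ.filter fun k => j ∈ (v k).1 := by
          rw [hk₀]; exact Finset.mem_singleton_self k₀
        exact (Finset.mem_filter.1 hm0).2
      have hw' : w v j = g (v k₀) j := by
        simp only [hwdef]
        apply prod_ofFn_single
        intro k hk
        have h1 : j ∉ (v k).1 := by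
          intro hmem
          have : k ∈ ({k₀} : Finset (Fin m)) := by
            rw [← hk₀]; exact Finset.mem_filter.2 ⟨Finset.mem_univ _, hmem⟩
          exact hk (Finset.mem_singleton.1 this)
        have h2 : j ≠ (v k).2 := fun h => h1 (h ▸ (hmemT _ (hv k)).2)
        simp only [hg]
        rw [if_neg h2, if_neg h1]
      rw [hw']
      simp only [hg]
      by_cases h : j = (v k₀).2
      · rw [if_pos h]; exact hy0
      · rw [if_neg h, if_pos hk₀mem]; exact hb1
    have hcount : ∀ v : Fin m → (Σ _ : Finset (Fin N), Fin N), (∀ k, v k ∈ T) →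
        (∑ j, (Finset.univ.filter fun k => j ∈ (v k).1).card) = m * n := by
      intro v hv
      simp_rw [Finset.card_filter]
      rw [Finset.sum_comm]
      have heach : ∀ k : Fin m, (∑ j : Fin N, if j ∈ (v k).1 then 1 else 0) = n := by
        intro k
        rw [Finset.sum_ite_mem, Finset.univ_inter, Finset.sum_const, (hmemT _ (hv k)).1,
          smul_eq_mul, mul_one]
      rw [Finset.sum_congr rfl fun k _ => heach k, Finset.sum_const, Finset.card_univ,
        Fintype.card_fin, smul_eq_mul]
    have hUmn : ∀ v, (∀ k, v k ∈ T) → (U v).card ≤ m * n := by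
      intro v hv
      refine le_trans Finset.card_biUnion_le ?_
      rw [Finset.sum_congr rfl fun k _ => (hmemT _ (hv k)).1, Finset.sum_const,
        Finset.card_univ, Fintype.card_fin, smul_eq_mul]
    have hUcard : ∀ v, (∀ k, v k ∈ T) →
        (∀ j ∈ U v, 2 ≤ (Finset.univ.filter fun k => j ∈ (v k).1).card) → (U v).card ≤ K := by
      intro v hv h2
      rw [hK, Nat.le_div_iff_mul_le (by norm_num)]
      calc (U v).card * 2 = ∑ _j ∈ U v, 2 := by rw [Finset.sum_const, smul_eq_mul, mul_comm]
        _ ≤ ∑ j ∈ U v, (Finset.univ.filter fun k => j ∈ (v k).1).card := Finset.sum_le_sum h2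
        _ ≤ ∑ j, (Finset.univ.filter fun k => j ∈ (v k).1).card :=
            Finset.sum_le_sum_of_subset (Finset.subset_univ _)
        _ = m * n := hcount v hv
    have hterm : ∀ v, (∀ k, v k ∈ T) → ‖∏ j, φ (w v j)‖ ≤ C₁ ^ (m * n) := by
      intro v hv
      rw [norm_prod]
      calc (∏ j, ‖φ (w v j)‖) ≤ ∏ j, (if j ∈ U v then C₁ else 1) := by
            apply Finset.prod_le_prod (fun _ _ => norm_nonneg _)
            intro j _
            by_cases hj : j ∈ U v
            · rw [if_pos hj]; exact hwnorm v j
            · rw [if_neg hj, hw1 v hv j hj, hφ_unital, norm_one]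
        _ = C₁ ^ (U v).card := by
            rw [Finset.prod_ite_mem, Finset.univ_inter, Finset.prod_const]
        _ ≤ C₁ ^ (m * n) := pow_le_pow_right₀ hC₁1 (hUmn v hv)
    have hV_T : ∀ v ∈ V, ∀ k, v k ∈ T := fun v hv k => Fintype.mem_piFinset.1 hv k
    set good := V.filter (fun v => (U v).card ≤ K) with hgood
    have hsum_eq : (∑ v ∈ V, ∏ j, φ (w v j)) = ∑ v ∈ good, ∏ j, φ (w v j) := by
      symm
      apply Finset.sum_subset (Finset.filter_subset _ _)
      intro v hvV hvn
      have hcard : ¬ (U v).card ≤ K := fun h => hvn (Finset.mem_filter.2 ⟨hvV, h⟩)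
      have hex : ∃ j ∈ U v, (Finset.univ.filter fun k => j ∈ (v k).1).card = 1 := by
        by_contra hc
        push_neg at hc
        apply hcard
        apply hUcard v (hV_T v hvV)
        intro j hj
        have h1 : 0 < (Finset.univ.filter fun k => j ∈ (v k).1).card := by
          obtain ⟨k, _, hk⟩ := Finset.mem_biUnion.1 hj
          exact Finset.card_pos.2 ⟨k, Finset.mem_filter.2 ⟨Finset.mem_univ _, hk⟩⟩
        have := hc j hj
        omega
      obtain ⟨j, _, hj1⟩ := hex
      exact Finset.prod_eq_zero (Finset.mem_univ j) (hzero v (hV_T v hvV) j hj1)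
    have hgoodcard : good.card ≤ (K+1) * N^K * (2^K*K)^m := by
      have hsub : good ⊆ (Finset.univ.powerset.filter
            fun Uu : Finset (Fin N) => Uu.card ≤ K).biUnion
          (fun Uu => Fintype.piFinset fun _ : Fin m => T.filter fun p => p.1 ⊆ Uu) := by
        intro v hv
        rw [hgood, Finset.mem_filter] at hv
        apply Finset.mem_biUnion.2
        refine ⟨U v, Finset.mem_filter.2 ⟨Finset.mem_powerset.2 (Finset.subset_univ _), hv.2⟩, ?_⟩
        rw [Fintype.mem_piFinset]
        intro k
        refine Finset.mem_filter.2 ⟨hV_T v hv.1 k, ?_⟩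
        intro x hx
        exact Finset.mem_biUnion.2 ⟨k, Finset.mem_univ _, hx⟩
      have hperU : ∀ Uu ∈ (Finset.univ.powerset.filter
            fun Uu : Finset (Fin N) => Uu.card ≤ K),
          (Fintype.piFinset fun _ : Fin m => T.filter fun p => p.1 ⊆ Uu).card ≤ (2^K*K)^m := by
        intro Uu hUu
        rw [Finset.mem_filter] at hUu
        rw [Fintype.card_piFinset_const]
        apply Nat.pow_le_pow_left
        have hsub2 : T.filter (fun p => p.1 ⊆ Uu) ⊆ Uu.powerset.sigma (fun s => s) := by
          intro p hp
          rw [Finset.mem_filter] at hp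
          rw [Finset.mem_sigma]
          exact ⟨Finset.mem_powerset.2 hp.2, (hmemT _ hp.1).2⟩
        calc (T.filter (fun p => p.1 ⊆ Uu)).card ≤ (Uu.powerset.sigma (fun s => s)).card :=
              Finset.card_le_card hsub2
          _ = ∑ s ∈ Uu.powerset, s.card := Finset.card_sigma _ _
          _ ≤ Uu.powerset.card * Uu.card := by
              rw [← smul_eq_mul]
              exact Finset.sum_le_card_nsmul _ _ _
                (fun s hs => Finset.card_le_card (Finset.mem_powerset.1 hs))
          _ ≤ 2^K * K := by
              rw [Finset.card_powerset]
              exact Nat.mul_le_mul (Nat.pow_le_pow_right (by norm_num) hUu.2) hUu.2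
      have hnumU : (Finset.univ.powerset.filter
            fun Uu : Finset (Fin N) => Uu.card ≤ K).card ≤ (K+1) * N^K := by
        have hsub2 : (Finset.univ.powerset.filter fun Uu : Finset (Fin N) => Uu.card ≤ K)
            ⊆ (Finset.range (K+1)).biUnion fun u => Finset.powersetCard u Finset.univ := by
          intro Uu hUu
          rw [Finset.mem_filter] at hUu
          exact Finset.mem_biUnion.2 ⟨Uu.card, Finset.mem_range.2 (Nat.lt_succ_of_le hUu.2),
            Finset.mem_powersetCard.2 ⟨Finset.subset_univ _, rfl⟩⟩
        calc (Finset.univ.powerset.filter fun Uu : Finset (Fin N) => Uu.card ≤ K).card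
            ≤ ((Finset.range (K+1)).biUnion fun u => Finset.powersetCard u Finset.univ).card :=
              Finset.card_le_card hsub2
          _ ≤ ∑ u ∈ Finset.range (K+1), (Finset.powersetCard u (Finset.univ : Finset (Fin N))).card :=
              Finset.card_biUnion_le
          _ ≤ ∑ _u ∈ Finset.range (K+1), N ^ K := by
              apply Finset.sum_le_sum
              intro u hu
              rw [Finset.card_powersetCard, Finset.card_univ, Fintype.card_fin]
              exact le_trans (Nat.choose_le_pow _ _)
                (Nat.pow_le_pow_right hN1 (Nat.lt_succ_iff.1 (Finset.mem_range.1 hu)))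
          _ = (K+1) * N^K := by rw [Finset.sum_const, Finset.card_range, smul_eq_mul]
      calc good.card ≤ _ := Finset.card_le_card hsub
        _ ≤ ∑ Uu ∈ (Finset.univ.powerset.filter fun Uu : Finset (Fin N) => Uu.card ≤ K),
              (Fintype.piFinset fun _ : Fin m => T.filter fun p => p.1 ⊆ Uu).card :=
            Finset.card_biUnion_le
        _ ≤ ∑ _Uu ∈ (Finset.univ.powerset.filter fun Uu : Finset (Fin N) => Uu.card ≤ K),
              (2^K*K)^m := Finset.sum_le_sum hperU
        _ = (Finset.univ.powerset.filter fun Uu : Finset (Fin N) => Uu.card ≤ K).card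
              * (2^K*K)^m := by rw [Finset.sum_const, smul_eq_mul]
        _ ≤ ((K+1) * N^K) * (2^K*K)^m := Nat.mul_le_mul_right _ hnumU
        _ = (K+1) * N^K * (2^K*K)^m := rfl
    have hSnorm : ‖prodState φ N ((Fsum b y N n) ^ m)‖ ≤ (good.card : ℝ) * C₁ ^ (m*n) := by
      rw [hS, hsum_eq]
      calc ‖∑ v ∈ good, ∏ j, φ (w v j)‖ ≤ ∑ v ∈ good, ‖∏ j, φ (w v j)‖ := norm_sum_le _ _
        _ ≤ ∑ _v ∈ good, C₁ ^ (m*n) := Finset.sum_le_sum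
            (fun v hv => hterm v (hV_T v (Finset.mem_of_mem_filter v hv)))
        _ = good.card * C₁^(m*n) := by rw [Finset.sum_const, nsmul_eq_mul]
    -- put the scalar back
    have hC₁0 : (0:ℝ) ≤ C₁ := le_trans zero_le_one hC₁1
    have hN0 : (0:ℝ) < (N:ℝ) := by exact_mod_cast Nat.lt_of_lt_of_le Nat.zero_lt_one hN1
    have hNR : (1:ℝ) ≤ (N:ℝ) := by exact_mod_cast hN1
    set r : ℝ := (N:ℝ) ^ (-((n:ℝ)+1)/2) with hr
    have hr0 : 0 ≤ r := Real.rpow_nonneg (le_of_lt hN0) _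
    rw [smul_pow, map_smul, smul_eq_mul, norm_mul, norm_pow, Complex.norm_real,
      Real.norm_of_nonneg hr0]
    have hkey : (N:ℝ)^(K:ℕ) * r^m ≤ (N:ℝ) ^ (-(m:ℝ)/2) := by
      have he1 : (N:ℝ)^(K:ℕ) * r^m = (N:ℝ) ^ ((K:ℝ) + (-((n:ℝ)+1)/2) * m) := by
        rw [Real.rpow_add hN0, Real.rpow_natCast, hr,
          ← Real.rpow_natCast ((N:ℝ) ^ (-((n:ℝ)+1)/2)) m, ← Real.rpow_mul (le_of_lt hN0)]
      rw [he1]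
      apply Real.rpow_le_rpow_of_exponent_le hNR
      have hKle : (K:ℝ) ≤ (m:ℝ) * n / 2 := by
        rw [hK]
        calc ((m * n / 2 : ℕ) : ℝ) ≤ ((m*n : ℕ):ℝ) / 2 := Nat.cast_div_le
          _ = (m:ℝ) * n / 2 := by push_cast; ring
      nlinarith [hKle]
    calc r ^ m * ‖prodState φ N ((Fsum b y N n) ^ m)‖
        ≤ r ^ m * ((good.card : ℝ) * C₁ ^ (m*n)) := by
          apply mul_le_mul_of_nonneg_left hSnorm (pow_nonneg hr0 m)
      _ ≤ r ^ m * ((((K+1) * N^K * (2^K*K)^m : ℕ) : ℝ) * C₁ ^ (m*n)) := by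
          apply mul_le_mul_of_nonneg_left _ (pow_nonneg hr0 m)
          apply mul_le_mul_of_nonneg_right _ (pow_nonneg hC₁0 _)
          exact_mod_cast hgoodcard
      _ = B * ((N:ℝ)^(K:ℕ) * r^m) := by push_cast [hB]; ring
      _ ≤ B * (N:ℝ) ^ (-(m:ℝ)/2) := by
          apply mul_le_mul_of_nonneg_left hkey
          rw [hB]
          positivity

  have hO : (fun N : ℕ =>
        prodState φ N
          (((((N : ℝ) ^ (-((n : ℝ) + 1) / 2) : ℝ) : ℂ) • Fsum b y N n) ^ m))
      =O[atTop] (fun N : ℕ => (N : ℝ) ^ (-(m : ℝ) / 2)) := by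
    rw [Asymptotics.isBigO_iff]
    refine ⟨B, ?_⟩
    filter_upwards [eventually_ge_atTop 1] with N hN
    calc ‖prodState φ N (((((N : ℝ) ^ (-((n : ℝ) + 1) / 2) : ℝ) : ℂ) • Fsum b y N n) ^ m)‖
        ≤ B * (N:ℝ) ^ (-(m:ℝ)/2) := main N hN
      _ = B * ‖(N:ℝ) ^ (-(m:ℝ)/2)‖ := by
          rw [Real.norm_of_nonneg (Real.rpow_nonneg (Nat.cast_nonneg N) _)]
  refine ⟨hO.trans_tendsto ?_, hO⟩
  have h1 : Tendsto (fun x : ℝ => x ^ (-((m:ℝ)/2))) atTop (𝓝 0) :=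
    tendsto_rpow_neg_atTop (by positivity)
  have h2 := h1.comp tendsto_natCast_atTop_atTop
  simpa [Function.comp_def, neg_div] using h2
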